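/- Chernoff's theorem for backward propagators: Let U(s,t), S ≤ s ≤ t ≤ T, be a backward propagator on a Banach space E with left generators A_t, and let Q_{t₁,t₂}, S ≤ t₁ ≤ t₂ ≤ T, be a family of contractions on E. Assume: (1) ∩_{t∈[S,T]} D(A_t) is dense in E; (2) there is a Banach space Y ⊆ ∩_t D(A_t), dense in E, invariant under all U(s,t), with ‖x‖_Y ≥ γ(‖x‖_E + sup_τ ‖A_τ x‖_E) for some γ > 0; (3) for every x ∈ Y and t, the map τ ↦ U(τ,t)x, [S,t] → Y, is continuous; (4) for every x ∈ Y, t ↦ A_t x is continuous into E; (5) for all x ∈ Y, (Q_{t−h,t}x − x)/h → A_t x as h ↓ 0, uniformly in t. Then for any [s,t] ⊆ [S,T], any sequence of partitions s = t_0 < t_1 < ... < t_n = t with mesh tending to 0, and any x ∈ E, Q_{t_0,t_1}···Q_{t_{n-1},t_n} x → U(s,t)x. -/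

import Mathlib

open Filter Topology Set

lemma chernoff_prod_norm_le {E : Type*} [NormedAddCommGroup E] [NormedSpace ℝ E]
    (L : List (E →L[ℝ] E)) (h : ∀ f ∈ L, ‖f‖ ≤ 1) : ‖L.prod‖ ≤ 1 := by
  induction L with
  | nil => rw [List.prod_nil]; exact ContinuousLinearMap.norm_id_le
  | cons a l ih =>
    rw [List.prod_cons]
    calc ‖a * l.prod‖ ≤ ‖a‖ * ‖l.prod‖ := norm_mul_le _ _
    _ ≤ 1 * 1 := by
        have := ih (fun f hf => h f (List.mem_cons_of_mem a hf))
        have ha := h a (List.mem_cons_self (a := a) (l := l))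
        exact mul_le_mul ha this (norm_nonneg _) zero_le_one
    _ = 1 := one_mul 1

lemma chernoff_telescope {E : Type*} [NormedAddCommGroup E] [NormedSpace ℝ E]
    (f : ℕ → (E →L[ℝ] E)) (G : ℕ → E) (m : ℕ) (hf : ∀ j < m, ‖f j‖ ≤ 1) :
    ‖(((List.range m).map f).prod) (G m) - G 0‖ ≤
      ∑ j ∈ Finset.range m, ‖f j (G (j+1)) - G j‖ := by
  induction m with
  | zero => simp
  | succ m ih =>
    have hf' : ∀ j < m, ‖f j‖ ≤ 1 := fun j hj => hf j (hj.trans (Nat.lt_succ_self m))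
    have hprodle : ‖((List.range m).map f).prod‖ ≤ 1 := by
      apply chernoff_prod_norm_le
      intro g hg
      obtain ⟨j, hj, rfl⟩ := List.mem_map.mp hg
      exact hf' j (List.mem_range.mp hj)
    have hsplit : ((List.range (m+1)).map f).prod =
        ((List.range m).map f).prod * f m := by
      rw [List.range_succ, List.map_append, List.prod_append]
      simp
    rw [hsplit, Finset.sum_range_succ]
    have key : (((List.range m).map f).prod * f m) (G (m+1)) - G 0 =
        (((List.range m).map f).prod (f m (G (m+1)) - G m)) +
          (((List.range m).map f).prod (G m) - G 0) := by
      simp [ContinuousLinearMap.mul_apply, map_sub]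
    rw [key]
    calc ‖_ + _‖ ≤ ‖((List.range m).map f).prod (f m (G (m+1)) - G m)‖ +
          ‖((List.range m).map f).prod (G m) - G 0‖ := norm_add_le _ _
    _ ≤ 1 * ‖f m (G (m+1)) - G m‖ + ∑ j ∈ Finset.range m, ‖f j (G (j+1)) - G j‖ := by
        gcongr
        · exact (((List.range m).map f).prod.le_opNorm _).trans
            (mul_le_mul_of_nonneg_right hprodle (norm_nonneg _))
        · exact ih hf'
    _ = _ := by rw [one_mul]; exact add_comm _ _

set_option maxHeartbeats 2000000 in
/-- Chernoff's theorem for backward propagators. -/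
theorem chernoff_backward_propagators {E Y : Type*}
    [NormedAddCommGroup E] [NormedSpace ℝ E] [CompleteSpace E]
    [NormedAddCommGroup Y] [NormedSpace ℝ Y] [CompleteSpace Y]
    (S T : ℝ) (hST : S ≤ T)
    (U Q : ℝ → ℝ → (E →L[ℝ] E))
    -- U is a backward propagator
    (hUprop : ∀ s τ t : ℝ, S ≤ s → s ≤ τ → τ ≤ t → t ≤ T → U s t = U s τ * U τ t)
    (hUid : ∀ s ∈ Icc S T, U s s = 1)
    -- Q is a family of contractions
    (hQcontr : ∀ t₁ t₂ : ℝ, S ≤ t₁ → t₁ ≤ t₂ → t₂ ≤ T → ‖Q t₁ t₂‖ ≤ 1)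
    -- left generators A_t with domains D t
    (D : ℝ → Set E) (A : ℝ → E → E)
    (hgen : ∀ t ∈ Icc S T, ∀ x ∈ D t,
      Tendsto (fun h : ℝ => h⁻¹ • (U (t - h) t x - x)) (𝓝[>] 0) (𝓝 (A t x)))
    -- (1) the common domain is dense
    (hdense : Dense (⋂ t ∈ Icc S T, D t))
    -- (2) the Banach space Y, continuously and densely embedded in E, inside all domains,
    -- invariant under U, with the norm domination
    (ι : Y →L[ℝ] E) (hι : Function.Injective ι) (hYdense : Dense (Set.range ι))
    (hYdom : ∀ y : Y, ∀ t ∈ Icc S T, ι y ∈ D t)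
    (γ : ℝ) (hγ : 0 < γ)
    (hnorm : ∀ y : Y, ∀ τ ∈ Icc S T, γ * (‖ι y‖ + ‖A τ (ι y)‖) ≤ ‖y‖)
    (V : ℝ → ℝ → Y → Y)
    (hV : ∀ s t : ℝ, S ≤ s → s ≤ t → t ≤ T → ∀ y : Y, ι (V s t y) = U s t (ι y))
    -- (3) continuity of τ ↦ U(τ,t)x as a map into Y
    (hVcont : ∀ y : Y, ∀ t ∈ Icc S T, ContinuousOn (fun τ => V τ t y) (Icc S t))
    -- (4) continuity of t ↦ A_t x
    (hAcont : ∀ y : Y, ContinuousOn (fun t => A t (ι y)) (Icc S T))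
    -- (5) uniform in t limit (Q_{t-h,t}x - x)/h → A_t x
    (hlim : ∀ y : Y, ∀ ε > (0 : ℝ), ∃ h₀ > (0 : ℝ), ∀ h : ℝ, 0 < h → h ≤ h₀ →
      ∀ t : ℝ, S ≤ t - h → t ≤ T →
        ‖h⁻¹ • (Q (t - h) t (ι y) - ι y) - A t (ι y)‖ < ε)
    -- a sequence of partitions of [s,t] ⊆ [S,T] with mesh tending to zero
    (s t : ℝ) (hs : S ≤ s) (hst : s ≤ t) (ht : t ≤ T)
    (k : ℕ → ℕ) (hk : ∀ n, 0 < k n)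
    (P : ℕ → ℕ → ℝ)
    (hP0 : ∀ n, P n 0 = s) (hPk : ∀ n, P n (k n) = t)
    (hPmono : ∀ n, ∀ j < k n, P n j < P n (j + 1))
    (hmesh : Tendsto (fun n =>
        (Finset.range (k n)).sup' (Finset.nonempty_range_iff.mpr (hk n).ne')
          (fun j => P n (j + 1) - P n j)) atTop (𝓝 0))
    (x : E) :
    Tendsto
      (fun n => (((List.range (k n)).map (fun j => Q (P n j) (P n (j + 1)))).prod) x)
      atTop (𝓝 (U s t x)) := by
  have htT : t ∈ Icc S T := ⟨hs.trans hst, ht⟩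
  set Pi : ℕ → E →L[ℝ] E :=
    fun n => ((List.range (k n)).map (fun j => Q (P n j) (P n (j + 1)))).prod with hPidef
  -- partition facts
  have hPle : ∀ n, ∀ j, j ≤ k n → ∀ i, i ≤ j → P n i ≤ P n j := by
    intro n j
    induction j with
    | zero => intro _ i hi; rw [Nat.le_zero.mp hi]
    | succ j ih =>
      intro hj i hi
      rcases Nat.eq_or_lt_of_le hi with h | h
      · rw [h]
      · exact le_trans (ih (le_trans (Nat.le_succ j) hj) i (Nat.lt_succ_iff.mp h))
          (le_of_lt (hPmono n j (Nat.lt_of_succ_le hj)))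
  have hPmem : ∀ n, ∀ j, j ≤ k n → P n j ∈ Icc s t := by
    intro n j hj
    constructor
    · rw [← hP0 n]; exact hPle n j hj 0 (Nat.zero_le j)
    · rw [← hPk n]; exact hPle n (k n) le_rfl j hj
  have hslt : s < t := by
    have h1 : P 0 0 < P 0 (k 0) := by
      rcases Nat.exists_eq_succ_of_ne_zero (hk 0).ne' with ⟨m, hm⟩
      calc P 0 0 ≤ P 0 m := hPle 0 m (by omega) 0 (Nat.zero_le m)
      _ < P 0 (m+1) := hPmono 0 m (by omega)
      _ = P 0 (k 0) := by rw [hm]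
    rw [hP0 0, hPk 0] at h1; exact h1
  have hQfac : ∀ n, ∀ j, j < k n → ‖Q (P n j) (P n (j+1))‖ ≤ 1 := by
    intro n j hj
    exact hQcontr _ _ (hs.trans (hPmem n j hj.le).1) (le_of_lt (hPmono n j hj))
      ((hPmem n (j+1) hj).2.trans ht)
  have hPinorm : ∀ n, ‖Pi n‖ ≤ 1 := by
    intro n
    apply chernoff_prod_norm_le
    intro f hf
    obtain ⟨j, hj, rfl⟩ := List.mem_map.mp hf
    exact hQfac n j (List.mem_range.mp hj)
  -- bound and linearity of the generator on Y
  have hAbound : ∀ τ ∈ Icc S T, ∀ z : Y, ‖A τ (ι z)‖ ≤ γ⁻¹ * ‖z‖ := by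
    intro τ hτ z
    have h1 := hnorm z τ hτ
    have h2 : γ * ‖A τ (ι z)‖ ≤ ‖z‖ := by nlinarith [norm_nonneg (ι z)]
    calc ‖A τ (ι z)‖ = γ⁻¹ * (γ * ‖A τ (ι z)‖) := by field_simp
    _ ≤ γ⁻¹ * ‖z‖ := mul_le_mul_of_nonneg_left h2 (by positivity)
  have hAsub : ∀ τ ∈ Icc S T, ∀ y1 y2 : Y,
      A τ (ι y1 - ι y2) = A τ (ι y1) - A τ (ι y2) := by
    intro τ hτ y1 y2
    have l1 := hgen τ hτ (ι y1) (hYdom y1 τ hτ)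
    have l2 := hgen τ hτ (ι y2) (hYdom y2 τ hτ)
    have l3 := hgen τ hτ (ι (y1 - y2)) (hYdom (y1 - y2) τ hτ)
    have heq : (fun h : ℝ => h⁻¹ • (U (τ - h) τ (ι (y1 - y2)) - ι (y1 - y2))) =
        fun h : ℝ => (h⁻¹ • (U (τ - h) τ (ι y1) - ι y1)) -
          (h⁻¹ • (U (τ - h) τ (ι y2) - ι y2)) := by
      funext h
      simp only [map_sub, smul_sub]
      abel
    rw [heq] at l3
    rw [← map_sub]
    exact tendsto_nhds_unique l3 (l1.sub l2)
  have hAadd : ∀ τ ∈ Icc S T, ∀ y1 y2 : Y,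
      A τ (ι y1 + ι y2) = A τ (ι y1) + A τ (ι y2) := by
    intro τ hτ y1 y2
    have l1 := hgen τ hτ (ι y1) (hYdom y1 τ hτ)
    have l2 := hgen τ hτ (ι y2) (hYdom y2 τ hτ)
    have l3 := hgen τ hτ (ι (y1 + y2)) (hYdom (y1 + y2) τ hτ)
    have heq : (fun h : ℝ => h⁻¹ • (U (τ - h) τ (ι (y1 + y2)) - ι (y1 + y2))) =
        fun h : ℝ => (h⁻¹ • (U (τ - h) τ (ι y1) - ι y1)) +
          (h⁻¹ • (U (τ - h) τ (ι y2) - ι y2)) := by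
      funext h
      simp only [map_add, smul_sub, smul_add]
      abel
    rw [heq] at l3
    rw [← map_add]
    exact tendsto_nhds_unique l3 (l1.add l2)
  have hAsmul : ∀ τ ∈ Icc S T, ∀ (c : ℝ) (z : Y), A τ (c • ι z) = c • A τ (ι z) := by
    intro τ hτ c z
    have l1 := hgen τ hτ (ι z) (hYdom z τ hτ)
    have l3 := hgen τ hτ (ι (c • z)) (hYdom (c • z) τ hτ)
    have heq : (fun h : ℝ => h⁻¹ • (U (τ - h) τ (ι (c • z)) - ι (c • z))) =
        fun h : ℝ => c • (h⁻¹ • (U (τ - h) τ (ι z) - ι z)) := by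
      funext h
      simp only [map_smul, smul_sub, smul_comm h⁻¹ c]
    rw [heq] at l3
    have h4 : A τ (ι (c • z)) = c • A τ (ι z) := tendsto_nhds_unique l3 (l1.const_smul c)
    rwa [map_smul] at h4
  have hAclm : ∀ τ ∈ Icc S T, ∃ B : Y →L[ℝ] E, (∀ z, B z = A τ (ι z)) ∧ ‖B‖ ≤ γ⁻¹ := by
    intro τ hτ
    let L : Y →ₗ[ℝ] E :=
      { toFun := fun z => A τ (ι z)
        map_add' := fun a b => by
          show A τ (ι (a + b)) = A τ (ι a) + A τ (ι b)
          rw [map_add]; exact hAadd τ hτ a b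
        map_smul' := fun c a => by
          show A τ (ι (c • a)) = c • A τ (ι a)
          rw [map_smul]; exact hAsmul τ hτ c a }
    exact ⟨L.mkContinuous γ⁻¹ (fun z => hAbound τ hτ z), fun z => rfl,
      L.mkContinuous_norm_le (by positivity) _⟩
  choose 𝒜 h𝒜app h𝒜norm using hAclm
  -- Banach–Steinhaus: uniform bound for the difference quotients of Q
  obtain ⟨M, hM0, hMbound⟩ : ∃ M : ℝ, 0 ≤ M ∧ ∀ (h τ : ℝ), 0 < h → S ≤ τ - h → τ ≤ T →
      ∀ z : Y, ‖h⁻¹ • (Q (τ - h) τ (ι z) - ι z) - A τ (ι z)‖ ≤ M * ‖z‖ := by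
    set idx := {p : ℝ × ℝ // 0 < p.1 ∧ S ≤ p.2 - p.1 ∧ p.2 ≤ T} with hidx
    have hmem : ∀ p : idx, p.1.2 ∈ Icc S T :=
      fun p => ⟨p.2.2.1.trans (sub_le_self _ p.2.1.le), p.2.2.2⟩
    set F : idx → Y →L[ℝ] E := fun p =>
      p.1.1⁻¹ • ((Q (p.1.2 - p.1.1) p.1.2).comp ι - ι) - 𝒜 p.1.2 (hmem p) with hF
    have hFapp : ∀ (p : idx) (z : Y),
        F p z = p.1.1⁻¹ • (Q (p.1.2 - p.1.1) p.1.2 (ι z) - ι z) - A p.1.2 (ι z) := by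
      intro p z
      simp [hF, h𝒜app]
    have hpt : ∀ z : Y, ∃ C, ∀ p : idx, ‖F p z‖ ≤ C := by
      intro z
      obtain ⟨h₀, hh₀, hb⟩ := hlim z 1 one_pos
      refine ⟨max 1 (h₀⁻¹ * (2 * ‖ι z‖) + γ⁻¹ * ‖z‖), fun p => ?_⟩
      rcases le_or_gt p.1.1 h₀ with hc | hc
      · rw [hFapp]
        exact le_max_of_le_left (hb p.1.1 p.2.1 hc p.1.2 p.2.2.1 p.2.2.2).le
      · rw [hFapp]
        refine le_max_of_le_right ?_
        have hQz : ‖Q (p.1.2 - p.1.1) p.1.2 (ι z)‖ ≤ ‖ι z‖ := by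
          calc ‖Q (p.1.2 - p.1.1) p.1.2 (ι z)‖ ≤ ‖Q (p.1.2 - p.1.1) p.1.2‖ * ‖ι z‖ :=
                (Q _ _).le_opNorm _
          _ ≤ 1 * ‖ι z‖ := mul_le_mul_of_nonneg_right
                (hQcontr _ _ p.2.2.1 (sub_le_self _ p.2.1.le) p.2.2.2) (norm_nonneg _)
          _ = ‖ι z‖ := one_mul _
        have h1 : ‖p.1.1⁻¹ • (Q (p.1.2 - p.1.1) p.1.2 (ι z) - ι z)‖ ≤ h₀⁻¹ * (2 * ‖ι z‖) := by
          rw [norm_smul, Real.norm_eq_abs, abs_of_pos (inv_pos.mpr p.2.1)]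
          have hn : ‖Q (p.1.2 - p.1.1) p.1.2 (ι z) - ι z‖ ≤ 2 * ‖ι z‖ := by
            calc ‖Q (p.1.2 - p.1.1) p.1.2 (ι z) - ι z‖ ≤
                ‖Q (p.1.2 - p.1.1) p.1.2 (ι z)‖ + ‖ι z‖ := norm_sub_le _ _
            _ ≤ 2 * ‖ι z‖ := by linarith
          have hinv : p.1.1⁻¹ ≤ h₀⁻¹ := by
            apply inv_anti₀ hh₀ hc.le
          exact mul_le_mul hinv hn (norm_nonneg _) (by positivity)
        have h2 : ‖A p.1.2 (ι z)‖ ≤ γ⁻¹ * ‖z‖ := hAbound _ (hmem p) z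
        calc ‖_ - _‖ ≤ ‖p.1.1⁻¹ • (Q (p.1.2 - p.1.1) p.1.2 (ι z) - ι z)‖ +
            ‖A p.1.2 (ι z)‖ := norm_sub_le _ _
        _ ≤ h₀⁻¹ * (2 * ‖ι z‖) + γ⁻¹ * ‖z‖ := add_le_add h1 h2
    obtain ⟨C, hC⟩ := banach_steinhaus hpt
    refine ⟨max C 0, le_max_right _ _, ?_⟩
    intro h τ hh h1 h2 z
    set p : idx := ⟨(h, τ), hh, h1, h2⟩ with hp
    have h3 := (F p).le_opNorm z
    rw [hFapp p z] at h3
    exact h3.trans (mul_le_mul_of_nonneg_right ((hC p).trans (le_max_left _ _)) (norm_nonneg _))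
  -- the key convergence on the dense subspace Y
  have key : ∀ y : Y, Tendsto (fun n => Pi n (ι y)) atTop (𝓝 (U s t (ι y))) := by
    intro y
    set w : ℝ → Y := fun τ => V τ t y with hw
    set g : ℝ → E := fun τ => U τ t (ι y) with hgdef
    have hsub : Icc s t ⊆ Icc S t := Icc_subset_Icc hs le_rfl
    have hsubT : Icc s t ⊆ Icc S T := Icc_subset_Icc hs ht
    have hιw : ∀ τ ∈ Icc S t, ι (w τ) = g τ := fun τ hτ => hV τ t hτ.1 hτ.2 ht y
    have hwcont : ContinuousOn w (Icc s t) := (hVcont y t htT).mono hsub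
    have hgcont : ContinuousOn g (Icc s t) :=
      ContinuousOn.congr (ι.continuous.comp_continuousOn hwcont)
        (fun τ hτ => (hιw τ (hsub hτ)).symm)
    set φ : ℝ → E := fun τ => A τ (g τ) with hφ
    have hgD : ∀ τ ∈ Icc s t, ∀ σ ∈ Icc S T, g τ ∈ D σ := by
      intro τ hτ σ hσ
      rw [← hιw τ (hsub hτ)]
      exact hYdom (w τ) σ hσ
    -- continuity of φ
    have hφcont : ContinuousOn φ (Icc s t) := by
      intro σ hσ
      have hbase : ContinuousWithinAt (fun τ => A τ (ι (w σ))) (Icc s t) σ :=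
        ((hAcont (w σ)).mono hsubT) σ hσ
      have h5 : Tendsto (fun τ => w τ - w σ) (𝓝[Icc s t] σ) (𝓝 0) := by
        have h6 : Tendsto w (𝓝[Icc s t] σ) (𝓝 (w σ)) := hwcont σ hσ
        simpa using h6.sub_const (w σ)
      have hzero : Tendsto (fun τ => A τ (ι (w τ)) - A τ (ι (w σ))) (𝓝[Icc s t] σ) (𝓝 0) := by
        apply squeeze_zero_norm' (a := fun τ => γ⁻¹ * ‖w τ - w σ‖)
        · filter_upwards [self_mem_nhdsWithin] with τ hτ
          have h6 : A τ (ι (w τ)) - A τ (ι (w σ)) = A τ (ι (w τ) - ι (w σ)) :=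
            (hAsub τ (hsubT hτ) (w τ) (w σ)).symm
          rw [h6, ← map_sub]
          exact hAbound τ (hsubT hτ) (w τ - w σ)
        · have := (h5.norm).const_mul γ⁻¹
          simpa using this
      have hsum : Tendsto (fun τ => (A τ (ι (w τ)) - A τ (ι (w σ))) + A τ (ι (w σ)))
          (𝓝[Icc s t] σ) (𝓝 (0 + A σ (ι (w σ)))) := hzero.add hbase
      rw [zero_add] at hsum
      have hev : (fun τ => (A τ (ι (w τ)) - A τ (ι (w σ))) + A τ (ι (w σ)))
          =ᶠ[𝓝[Icc s t] σ] φ := by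
        filter_upwards [self_mem_nhdsWithin] with τ hτ
        rw [sub_add_cancel, hιw τ (hsub hτ)]
      have hφσ : A σ (ι (w σ)) = φ σ := by rw [hιw σ (hsub hσ)]
      rw [hφσ] at hsum
      exact hsum.congr' hev
    -- uniform continuity of φ
    have hφmod : ∀ ε > (0:ℝ), ∃ δ > (0:ℝ), ∀ a ∈ Icc s t, ∀ b ∈ Icc s t,
        dist a b < δ → ‖φ a - φ b‖ < ε := by
      intro ε hε
      have hφuc : UniformContinuousOn φ (Icc s t) :=
        isCompact_Icc.uniformContinuousOn_of_continuous hφcont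
      obtain ⟨δ, hδ, hd⟩ := Metric.uniformContinuousOn_iff.mp hφuc ε hε
      exact ⟨δ, hδ, fun a ha b hb hab => by rw [← dist_eq_norm]; exact hd a ha b hb hab⟩
    -- uniform differentiability of the propagator (lemma B)
    have lemB : ∀ ε > (0:ℝ), ∃ δ > (0:ℝ), ∀ h τ : ℝ, 0 < h → h ≤ δ → τ ∈ Icc s t →
        s ≤ τ - h → ‖g (τ - h) - g τ - h • φ τ‖ ≤ ε * h := by
      intro ε hε
      obtain ⟨δ, hδ, hd⟩ := hφmod ε hε
      refine ⟨δ, hδ, fun h τ hh hhδ hτ hτh => ?_⟩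
      set Fn : ℝ → E := fun u => g (τ - u) - u • φ τ with hFn
      have hIcc1 : ∀ u ∈ Icc (0:ℝ) h, τ - u ∈ Icc s t := fun u hu =>
        ⟨by linarith [hu.2], by linarith [hu.1, hτ.2]⟩
      have hcont : ContinuousOn Fn (Icc 0 h) := by
        apply ContinuousOn.sub
        · exact hgcont.comp (continuousOn_const.sub continuousOn_id)
            (fun u hu => hIcc1 u hu)
        · exact continuousOn_id.smul continuousOn_const
      have hderiv : ∀ u ∈ Ico (0:ℝ) h, HasDerivWithinAt Fn (φ (τ - u) - φ τ) (Ici u) u := by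
        intro u hu
        have hτu : τ - u ∈ Icc s t := hIcc1 u ⟨hu.1, hu.2.le⟩
        have h1 : HasDerivWithinAt (fun u' => g (τ - u')) (φ (τ - u)) (Ici u) u := by
          rw [hasDerivWithinAt_iff_tendsto_slope, Ici_sdiff_left]
          have hbase := hgen (τ - u) (hsubT hτu) (g (τ - u))
            (hgD (τ - u) hτu (τ - u) (hsubT hτu))
          have hev : (fun h' : ℝ => h'⁻¹ • (U (τ - u - h') (τ - u) (g (τ - u)) - g (τ - u)))
              =ᶠ[𝓝[>] (0:ℝ)] fun h' : ℝ => h'⁻¹ • (g (τ - u - h') - g (τ - u)) := by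
            filter_upwards [Ioo_mem_nhdsGT_of_mem
              (⟨le_refl (0:ℝ), by linarith [hu.2]⟩ : (0:ℝ) ∈ Ico 0 (h - u))] with h' hh'
            have hS' : S ≤ τ - u - h' := by
              have : τ - h ≤ τ - u - h' := by linarith [hh'.2]
              linarith
            have hcomp := hUprop (τ - u - h') (τ - u) t hS' (by linarith [hh'.1])
              (by linarith [hτu.2]) (by linarith : t ≤ T)
            congr 1
            show U (τ - u - h') (τ - u) (U (τ - u) t (ι y)) - U (τ - u) t (ι y)
              = U (τ - u - h') t (ι y) - U (τ - u) t (ι y)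
            rw [← ContinuousLinearMap.mul_apply, ← hcomp]
          have hlim2 : Tendsto (fun h' : ℝ => h'⁻¹ • (g (τ - u - h') - g (τ - u)))
              (𝓝[>] 0) (𝓝 (φ (τ - u))) := Tendsto.congr' hev hbase
          have hmap : Tendsto (fun u' => u' - u) (𝓝[Ioi u] u) (𝓝[>] (0:ℝ)) := by
            apply tendsto_nhdsWithin_of_tendsto_nhds_of_eventually_within
            · have h7 : Tendsto (fun u' : ℝ => u' - u) (𝓝 u) (𝓝 (u - u)) :=
                (continuous_id.sub continuous_const).tendsto u
              rw [sub_self] at h7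
              exact h7.mono_left nhdsWithin_le_nhds
            · filter_upwards [self_mem_nhdsWithin] with u' hu'
              exact sub_pos.mpr (mem_Ioi.mp hu')
          have hcomp2 := hlim2.comp hmap
          apply hcomp2.congr
          intro u'
          show (u' - u)⁻¹ • (g (τ - u - (u' - u)) - g (τ - u)) = slope (fun v => g (τ - v)) u u'
          rw [slope_def_module]
          rw [show τ - u - (u' - u) = τ - u' by ring]
        have h2 : HasDerivWithinAt (fun u' : ℝ => u' • φ τ) (φ τ) (Ici u) u := by
          have := ((hasDerivAt_id u).smul_const (φ τ)).hasDerivWithinAt (s := Ici u)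
          simpa using this
        exact h1.sub h2
      have hbound : ∀ u ∈ Ico (0:ℝ) h, ‖φ (τ - u) - φ τ‖ ≤ ε := by
        intro u hu
        have hτu := hIcc1 u ⟨hu.1, hu.2.le⟩
        apply le_of_lt
        apply hd _ hτu _ hτ
        rw [Real.dist_eq, show τ - u - τ = -u by ring, abs_neg, abs_of_nonneg hu.1]
        exact lt_of_lt_of_le hu.2 hhδ
      have hmvt := norm_image_sub_le_of_norm_deriv_right_le_segment hcont hderiv hbound h
        (right_mem_Icc.mpr hh.le)
      have hFn0 : Fn 0 = g τ := by simp [hFn]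
      have hFnh : Fn h = g (τ - h) - h • φ τ := rfl
      rw [hFn0, hFnh] at hmvt
      calc ‖g (τ - h) - g τ - h • φ τ‖ = ‖g (τ - h) - h • φ τ - g τ‖ := by
            congr 1; abel
      _ ≤ ε * (h - 0) := hmvt
      _ = ε * h := by ring
    -- uniform convergence of the Chernoff quotients on the compact orbit (lemma A)
    have lemA : ∀ ε > (0:ℝ), ∃ δ > (0:ℝ), ∀ h τ : ℝ, 0 < h → h ≤ δ → τ ∈ Icc s t →
        s ≤ τ - h → ‖Q (τ - h) τ (g τ) - g τ - h • φ τ‖ ≤ ε * h := by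
      intro ε hε
      have hK : IsCompact (w '' Icc s t) := isCompact_Icc.image_of_continuousOn hwcont
      obtain ⟨Z, hZfin, hZcover⟩ := (Metric.totallyBounded_iff.mp hK.totallyBounded)
        (ε / (2 * (M + 1))) (by positivity)
      have hch : ∀ z : Y, ∃ h₀ > (0:ℝ), ∀ h : ℝ, 0 < h → h ≤ h₀ → ∀ τ : ℝ, S ≤ τ - h →
          τ ≤ T → ‖h⁻¹ • (Q (τ - h) τ (ι z) - ι z) - A τ (ι z)‖ < ε/2 :=
        fun z => hlim z (ε/2) (by positivity)
      choose h₀ hh₀pos hh₀ using hch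
      have hKne : (w '' Icc s t).Nonempty := ⟨w s, mem_image_of_mem w (left_mem_Icc.mpr hst)⟩
      have hZne : hZfin.toFinset.Nonempty := by
        obtain ⟨p, hp⟩ := hKne
        have hp2 := hZcover hp
        simp only [mem_iUnion] at hp2
        obtain ⟨z, hz, _⟩ := hp2
        exact ⟨z, hZfin.mem_toFinset.mpr hz⟩
      set δ := hZfin.toFinset.inf' hZne h₀ with hδdef
      have hδpos : 0 < δ := by
        rw [hδdef, Finset.lt_inf'_iff]
        exact fun z _ => hh₀pos z
      refine ⟨δ, hδpos, fun h τ hh hhδ hτ hτh => ?_⟩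
      have hwτ : w τ ∈ w '' Icc s t := mem_image_of_mem w hτ
      obtain ⟨z, hzZ, hznear⟩ : ∃ z ∈ Z, dist (w τ) z < ε / (2 * (M + 1)) := by
        have hp2 := hZcover hwτ
        simp only [mem_iUnion, Metric.mem_ball] at hp2
        obtain ⟨z, hz, hdz⟩ := hp2
        exact ⟨z, hz, hdz⟩
      have hSτ : S ≤ τ - h := hs.trans hτh
      have hτT : τ ≤ T := hτ.2.trans ht
      have hτST : τ ∈ Icc S T := ⟨hs.trans hτ.1, hτT⟩
      have e1 : ‖h⁻¹ • (Q (τ - h) τ (ι (w τ)) - ι (w τ)) - A τ (ι (w τ))‖ ≤ ε := by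
        have hz1 := hMbound h τ hh hSτ hτT (w τ - z)
        have hz2 := hh₀ z h hh
          (hhδ.trans (hδdef ▸ Finset.inf'_le h₀ (hZfin.mem_toFinset.mpr hzZ))) τ hSτ hτT
        have hA3 : A τ (ι (w τ - z)) = A τ (ι (w τ)) - A τ (ι z) := by
          rw [map_sub]; exact hAsub τ hτST (w τ) z
        have hdecomp : h⁻¹ • (Q (τ - h) τ (ι (w τ)) - ι (w τ)) - A τ (ι (w τ)) =
            (h⁻¹ • (Q (τ - h) τ (ι (w τ - z)) - ι (w τ - z)) - A τ (ι (w τ - z))) +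
            (h⁻¹ • (Q (τ - h) τ (ι z) - ι z) - A τ (ι z)) := by
          rw [hA3]
          simp only [map_sub, smul_sub]
          abel
        rw [hdecomp]
        have hMz : M * ‖w τ - z‖ ≤ M * (ε / (2 * (M + 1))) := by
          apply mul_le_mul_of_nonneg_left _ hM0
          rw [← dist_eq_norm]
          exact hznear.le
        have hMe : M * (ε / (2 * (M + 1))) ≤ ε / 2 := by
          rw [← mul_div_assoc]
          rw [div_le_div_iff₀ (by positivity) (by norm_num : (0:ℝ) < 2)]
          nlinarith
        calc ‖_ + _‖ ≤ ‖h⁻¹ • (Q (τ - h) τ (ι (w τ - z)) - ι (w τ - z)) - A τ (ι (w τ - z))‖ +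
            ‖h⁻¹ • (Q (τ - h) τ (ι z) - ι z) - A τ (ι z)‖ := norm_add_le _ _
        _ ≤ M * ‖w τ - z‖ + ε/2 := add_le_add hz1 hz2.le
        _ ≤ ε/2 + ε/2 := add_le_add (hMz.trans hMe) le_rfl
        _ = ε := by ring
      rw [hιw τ (hsub hτ)] at e1
      have e2 : Q (τ - h) τ (g τ) - g τ - h • φ τ =
          h • (h⁻¹ • (Q (τ - h) τ (g τ) - g τ) - φ τ) := by
        rw [smul_sub, smul_inv_smul₀ hh.ne']
      calc ‖Q (τ - h) τ (g τ) - g τ - h • φ τ‖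
          = ‖h • (h⁻¹ • (Q (τ - h) τ (g τ) - g τ) - φ τ)‖ := by rw [e2]
      _ = |h| * ‖h⁻¹ • (Q (τ - h) τ (g τ) - g τ) - φ τ‖ := by
          rw [norm_smul, Real.norm_eq_abs]
      _ = h * ‖h⁻¹ • (Q (τ - h) τ (g τ) - g τ) - φ τ‖ := by rw [abs_of_pos hh]
      _ ≤ h * ε := mul_le_mul_of_nonneg_left e1 hh.le
      _ = ε * h := mul_comm h ε
    -- the main estimate
    have hest : ∀ ε > (0:ℝ), ∀ᶠ n in atTop, ‖Pi n (ι y) - U s t (ι y)‖ ≤ ε := by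
      intro ε hε
      have htspos : (0:ℝ) < t - s := sub_pos.mpr hslt
      set ε' := ε / (2 * (t - s)) with hε'
      have hε'pos : 0 < ε' := div_pos hε (by linarith)
      obtain ⟨δ₁, hδ₁, hA1⟩ := lemA ε' hε'pos
      obtain ⟨δ₂, hδ₂, hB1⟩ := lemB ε' hε'pos
      set δ := min δ₁ δ₂ with hδdef
      have hδpos : 0 < δ := lt_min hδ₁ hδ₂
      filter_upwards [hmesh.eventually (eventually_lt_nhds hδpos)] with n hn
      set Gn : ℕ → E := fun j => g (P n j) with hGn
      have htel := chernoff_telescope (fun j => Q (P n j) (P n (j+1))) Gn (k n)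
        (fun j hj => hQfac n j hj)
      have hend1 : Gn (k n) = ι y := by
        show g (P n (k n)) = ι y
        rw [hPk n]
        show U t t (ι y) = ι y
        rw [hUid t htT]
        rfl
      have hend0 : Gn 0 = U s t (ι y) := by
        show g (P n 0) = U s t (ι y)
        rw [hP0 n]
      rw [hend1, hend0] at htel
      refine le_trans htel ?_
      have hterm : ∀ j ∈ Finset.range (k n), ‖Q (P n j) (P n (j+1)) (Gn (j+1)) - Gn j‖ ≤
          2 * ε' * (P n (j+1) - P n j) := by
        intro j hj
        rw [Finset.mem_range] at hj
        set τ := P n (j+1) with hτdef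
        set h := P n (j+1) - P n j with hh
        have hhpos : 0 < h := sub_pos.mpr (hPmono n j hj)
        have hτmem : τ ∈ Icc s t := hPmem n (j+1) hj
        have hPj : P n j = τ - h := by rw [hh, hτdef]; ring
        have hτhs : s ≤ τ - h := by rw [← hPj]; exact (hPmem n j hj.le).1
        have hhδ : h ≤ δ := by
          refine le_trans ?_ hn.le
          exact Finset.le_sup' (fun j => P n (j + 1) - P n j) (Finset.mem_range.mpr hj)
        have e1 := hA1 h τ hhpos (hhδ.trans (min_le_left _ _)) hτmem hτhs
        have e2 := hB1 h τ hhpos (hhδ.trans (min_le_right _ _)) hτmem hτhs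
        have hGj : Gn j = g (τ - h) := by rw [hGn]; show g (P n j) = g (τ - h); rw [hPj]
        have hGj1 : Gn (j+1) = g τ := rfl
        rw [hGj, hGj1, hPj]
        calc ‖Q (τ - h) τ (g τ) - g (τ - h)‖
            = ‖(Q (τ - h) τ (g τ) - g τ - h • φ τ) - (g (τ - h) - g τ - h • φ τ)‖ := by
              congr 1; abel
        _ ≤ ‖Q (τ - h) τ (g τ) - g τ - h • φ τ‖ + ‖g (τ - h) - g τ - h • φ τ‖ :=
              norm_sub_le _ _
        _ ≤ ε' * h + ε' * h := add_le_add e1 e2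
        _ = 2 * ε' * h := by ring
      refine le_trans (Finset.sum_le_sum hterm) ?_
      rw [← Finset.mul_sum, Finset.sum_range_sub (fun j => P n j), hPk n, hP0 n]
      have : 2 * ε' * (t - s) = ε := by
        rw [hε']
        field_simp
      exact le_of_eq this
    rw [Metric.tendsto_atTop]
    intro ε hε
    obtain ⟨N, hN⟩ := eventually_atTop.mp (hest (ε/2) (by positivity))
    refine ⟨N, fun n hn => ?_⟩
    rw [dist_eq_norm]
    exact lt_of_le_of_lt (hN n hn) (by linarith)
  -- U s t is a contraction
  have hUc : ∀ z : E, ‖U s t z‖ ≤ ‖z‖ := by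
    have hd : Set.range ι ⊆ {z : E | ‖U s t z‖ ≤ ‖z‖} := by
      rintro _ ⟨y, rfl⟩
      have h1 : Tendsto (fun n => ‖Pi n (ι y)‖) atTop (𝓝 ‖U s t (ι y)‖) := (key y).norm
      refine le_of_tendsto h1 (Eventually.of_forall fun n => ?_)
      calc ‖Pi n (ι y)‖ ≤ ‖Pi n‖ * ‖ι y‖ := (Pi n).le_opNorm _
      _ ≤ 1 * ‖ι y‖ := mul_le_mul_of_nonneg_right (hPinorm n) (norm_nonneg _)
      _ = ‖ι y‖ := one_mul _
    have hcl : IsClosed {z : E | ‖U s t z‖ ≤ ‖z‖} :=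
      isClosed_le ((U s t).continuous.norm) continuous_norm
    intro z
    have : z ∈ closure (Set.range ι) := by rw [hYdense.closure_eq]; trivial
    exact hcl.closure_subset ((closure_mono hd) this)
  -- conclude by density
  rw [Metric.tendsto_atTop]
  intro ε hε
  have hdr : DenseRange ι := hYdense
  obtain ⟨y, hy⟩ := hdr.exists_dist_lt x (by positivity : (0:ℝ) < ε/3)
  obtain ⟨N, hN⟩ := Metric.tendsto_atTop.mp (key y) (ε/3) (by positivity)
  refine ⟨N, fun n hn => ?_⟩
  have h1 : dist (Pi n x) (Pi n (ι y)) < ε/3 := by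
    rw [dist_eq_norm, ← map_sub]
    calc ‖Pi n (x - ι y)‖ ≤ ‖Pi n‖ * ‖x - ι y‖ := (Pi n).le_opNorm _
    _ ≤ 1 * ‖x - ι y‖ := mul_le_mul_of_nonneg_right (hPinorm n) (norm_nonneg _)
    _ < ε/3 := by rw [one_mul, ← dist_eq_norm]; exact hy
  have h3 : dist (U s t (ι y)) (U s t x) < ε/3 := by
    rw [dist_eq_norm, ← map_sub]
    calc ‖U s t (ι y - x)‖ ≤ ‖ι y - x‖ := hUc _
    _ < ε/3 := by rw [← dist_eq_norm, dist_comm]; exact hy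
  calc dist (Pi n x) (U s t x) ≤
      dist (Pi n x) (Pi n (ι y)) + dist (Pi n (ι y)) (U s t (ι y)) +
        dist (U s t (ι y)) (U s t x) := dist_triangle4 _ _ _ _
  _ < ε/3 + ε/3 + ε/3 := add_lt_add (add_lt_add h1 (hN n hn)) h3
  _ = ε := by ring
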